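/- arXiv:1305.1243 — 3 statements merged into one kernel-verified Lean document; each statement's English description precedes it below -/
import Mathlib

section
/- Let p ≡ 1 (mod 4) be prime, ψ a nontrivial additive character of F_p, χ₂ the quadratic character, ρ a character of order 4 of F_p× with ρ² = χ₂. For A, B ∈ F_p× the identity ∑_{x ∈ F_p} χ₂(x) ψ(A x² + B x) = χ₂(AB) ψ(−B²·(8A)⁻¹) · ∑_{b ∈ F_p×} ρ(b) ψ((16A)⁻¹ B² (b + b⁻¹)) holds. -/
open scoped BigOperators

noncomputable section

open Finset

lemma my_two_ne_zero {p : ℕ} [Fact p.Prime] (hp2 : p ≠ 2) : (2 : ZMod p) ≠ 0 := by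
  have hp' : p.Prime := Fact.out
  intro h
  have h2 : ((2:ℕ) : ZMod p) = 0 := by exact_mod_cast h
  exact hp2 ((Nat.prime_dvd_prime_iff_eq hp' Nat.prime_two).mp
    ((ZMod.natCast_eq_zero_iff 2 p).mp h2))

lemma aux_sq_sum {p : ℕ} [Fact p.Prime] (hp2 : p ≠ 2) (χC : MulChar (ZMod p) ℂ)
    (hχC : χC = (quadraticChar (ZMod p)).ringHomComp (Int.castRingHom ℂ)) (f : ZMod p → ℂ) :
    ∑ y : ZMod p, f (y ^ 2) = ∑ x : ZMod p, (1 + χC x) * f x := by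
  have hchar : ringChar (ZMod p) ≠ 2 := by rw [ZMod.ringChar_zmod_n]; exact hp2
  rw [← Finset.sum_fiberwise' Finset.univ (fun y : ZMod p => y ^ 2) f]
  refine Finset.sum_congr rfl fun a _ => ?_
  rw [Finset.sum_const, nsmul_eq_mul]
  congr 1
  have h := quadraticChar_card_sqrts hchar a
  have hset : {x : ZMod p | x ^ 2 = a}.toFinset
      = Finset.univ.filter (fun y : ZMod p => y ^ 2 = a) := by
    ext x; simp
  rw [hset] at h
  have h2 : (((Finset.univ.filter (fun y : ZMod p => y ^ 2 = a)).card : ℤ) : ℂ)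
      = ((quadraticChar (ZMod p) a : ℤ) : ℂ) + 1 := by exact_mod_cast congrArg (Int.cast : ℤ → ℂ) h
  push_cast at h2
  rw [h2, hχC]
  simp [MulChar.ringHomComp_apply]
  ring

lemma aux_units_sum {p : ℕ} [Fact p.Prime] (g : ZMod p → ℂ) (h0 : g 0 = 0) :
    ∑ u : (ZMod p)ˣ, g (u : ZMod p) = ∑ x : ZMod p, g x := by
  classical
  have h1 : ∑ x : ZMod p, g x = ∑ x ∈ Finset.univ.filter (fun x : ZMod p => x ≠ 0), g x := by
    rw [Finset.sum_filter]
    refine Finset.sum_congr rfl fun x _ => ?_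
    by_cases hx : x = 0 <;> simp [hx, h0]
  rw [h1]
  refine Finset.sum_bij' (i := fun (u : (ZMod p)ˣ) (_ : u ∈ Finset.univ) => (u : ZMod p))
    (j := fun x hx => Units.mk0 x (by simpa using (Finset.mem_filter.mp hx).2))
    ?_ ?_ ?_ ?_ ?_
  · intro u _; simp [Units.ne_zero u]
  · intro x hx; simp
  · intro u _; exact Units.ext rfl
  · intro x hx; simp
  · intro u _; rfl

lemma affine_bij {K : Type*} [Field K] {a : K} (ha : a ≠ 0) (b : K) :
    Function.Bijective fun x : K => a * x + b :=
  Function.bijective_iff_has_inverse.mpr ⟨fun y => (y - b) / a,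
    fun x => by field_simp; ring, fun y => by field_simp; ring⟩

lemma inv_bij {K : Type*} [Field K] : Function.Bijective fun x : K => x⁻¹ :=
  Function.Involutive.bijective (fun x => inv_inv x)

lemma aux_card_fiber {p : ℕ} [Fact p.Prime] (hp2 : p ≠ 2) (s : ZMod p) :
    (Finset.univ.filter fun t : (ZMod p)ˣ => (t : ZMod p) + ((t : ZMod p))⁻¹ = s).card
      = (Finset.univ.filter fun u : ZMod p => u ^ 2 = s ^ 2 - 4).card := by
  classical
  have h2 : (2 : ZMod p) ≠ 0 := my_two_ne_zero hp2
  have h4 : (4 : ZMod p) ≠ 0 := by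
    have : (4 : ZMod p) = 2 * 2 := by norm_num
    rw [this]; exact mul_ne_zero h2 h2
  have hsu : ∀ u : ZMod p, u ^ 2 = s ^ 2 - 4 → s + u ≠ 0 := by
    intro u hu h
    have hu2 : u = -s := by linear_combination h
    subst hu2
    exact h4 (by linear_combination hu)
  refine Finset.card_bij' (i := fun t _ => ((t : ZMod p) - ((t : ZMod p))⁻¹))
    (j := fun u hu => Units.mk0 ((s + u) / 2)
      (div_ne_zero (hsu u (Finset.mem_filter.mp hu).2) h2)) ?_ ?_ ?_ ?_
  · intro t ht
    have hts : (t : ZMod p) + ((t : ZMod p))⁻¹ = s := (Finset.mem_filter.mp ht).2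
    have htne : (t : ZMod p) ≠ 0 := Units.ne_zero t
    simp only [Finset.mem_filter, Finset.mem_univ, true_and]
    rw [← hts]
    field_simp
    ring
  · intro u hu
    have huu : u ^ 2 = s ^ 2 - 4 := (Finset.mem_filter.mp hu).2
    have hne : s + u ≠ 0 := hsu u huu
    simp only [Finset.mem_filter, Finset.mem_univ, true_and, Units.val_mk0]
    field_simp
    linear_combination huu
  · intro t ht
    have hts : (t : ZMod p) + ((t : ZMod p))⁻¹ = s := (Finset.mem_filter.mp ht).2
    have htne : (t : ZMod p) ≠ 0 := Units.ne_zero t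
    refine Units.ext ?_
    simp only [Units.val_mk0]
    rw [← hts]
    field_simp
    ring
  · intro u hu
    have huu : u ^ 2 = s ^ 2 - 4 := (Finset.mem_filter.mp hu).2
    have hne : s + u ≠ 0 := hsu u huu
    simp only [Units.val_mk0]
    field_simp
    linear_combination -huu

lemma aux_inv_param {p : ℕ} [Fact p.Prime] (hp2 : p ≠ 2) (χC : MulChar (ZMod p) ℂ)
    (hχC : χC = (quadraticChar (ZMod p)).ringHomComp (Int.castRingHom ℂ)) (G : ZMod p → ℂ) :
    ∑ t : (ZMod p)ˣ, G ((t : ZMod p) + ((t : ZMod p))⁻¹)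
      = ∑ s : ZMod p, (1 + χC (s ^ 2 - 4)) * G s := by
  classical
  have hchar : ringChar (ZMod p) ≠ 2 := by rw [ZMod.ringChar_zmod_n]; exact hp2
  rw [← Finset.sum_fiberwise' Finset.univ
    (fun t : (ZMod p)ˣ => (t : ZMod p) + ((t : ZMod p))⁻¹) G]
  refine Finset.sum_congr rfl fun s _ => ?_
  rw [Finset.sum_const, nsmul_eq_mul, aux_card_fiber hp2 s]
  congr 1
  have h := quadraticChar_card_sqrts hchar (s ^ 2 - 4)
  have hset : {x : ZMod p | x ^ 2 = s ^ 2 - 4}.toFinset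
      = Finset.univ.filter (fun y : ZMod p => y ^ 2 = s ^ 2 - 4) := by
    ext x; simp
  rw [hset] at h
  have h2 : (((Finset.univ.filter (fun y : ZMod p => y ^ 2 = s ^ 2 - 4)).card : ℤ) : ℂ)
      = ((quadraticChar (ZMod p) (s ^ 2 - 4) : ℤ) : ℂ) + 1 := by
    exact_mod_cast congrArg (Int.cast : ℤ → ℂ) h
  push_cast at h2
  rw [h2, hχC]
  simp [MulChar.ringHomComp_apply]
  ring

/-- The quadratically twisted quadratic sum equals a quartic-twisted Salié-type sum. -/
theorem stmt_3 {p : ℕ} [Fact p.Prime] (hp : p % 4 = 1)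
    (ψ : AddChar (ZMod p) ℂ) (hψ : ψ ≠ 1)
    (ρ : MulChar (ZMod p) ℂ) (hρ : orderOf ρ = 4)
    (hρ2 : ρ ^ 2 = (quadraticChar (ZMod p)).ringHomComp (Int.castRingHom ℂ))
    (A B : ZMod p) (hA : A ≠ 0) (hB : B ≠ 0) :
    ∑ x : ZMod p, ((quadraticChar (ZMod p) x : ℤ) : ℂ) * ψ (A * x ^ 2 + B * x) =
      ((quadraticChar (ZMod p) (A * B) : ℤ) : ℂ) * ψ (-B ^ 2 * (8 * A)⁻¹) *
        ∑ b : (ZMod p)ˣ,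
          ρ (b : ZMod p) * ψ ((16 * A)⁻¹ * B ^ 2 * ((b : ZMod p) + ((b : ZMod p))⁻¹)) := by
  classical
  have hp2 : p ≠ 2 := by rintro rfl; norm_num at hp
  have h2 : (2 : ZMod p) ≠ 0 := my_two_ne_zero hp2
  have h4 : (4 : ZMod p) ≠ 0 := by
    have h : (4 : ZMod p) = 2 * 2 := by norm_num
    rw [h]; exact mul_ne_zero h2 h2
  have h8 : (8 : ZMod p) ≠ 0 := by
    have h : (8 : ZMod p) = 2 * 4 := by norm_num
    rw [h]; exact mul_ne_zero h2 h4
  have h16 : (16 : ZMod p) ≠ 0 := by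
    have h : (16 : ZMod p) = 4 * 4 := by norm_num
    rw [h]; exact mul_ne_zero h4 h4
  set χC : MulChar (ZMod p) ℂ := (quadraticChar (ZMod p)).ringHomComp (Int.castRingHom ℂ)
    with hχdef
  have hχe : ∀ x : ZMod p, ((quadraticChar (ZMod p) x : ℤ) : ℂ) = χC x := by
    intro x; simp [hχdef, MulChar.ringHomComp_apply]
  simp only [hχe]
  -- character facts
  have hχ0 : χC (0 : ZMod p) = 0 := by
    rw [hχdef]; simp [MulChar.ringHomComp_apply]
  have hχsq : ∀ {x : ZMod p}, x ≠ 0 → χC (x ^ 2) = 1 := by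
    intro x hx
    have h := quadraticChar_sq_one' (F := ZMod p) hx
    rw [hχdef]
    simp [MulChar.ringHomComp_apply, h]
  have hχs : ∀ {x : ZMod p}, x ≠ 0 → χC x * χC x = 1 := by
    intro x hx; rw [← map_mul, ← sq]; exact hχsq hx
  have hχne : ∀ {x : ZMod p}, x ≠ 0 → χC x ≠ 0 := by
    intro x hx h
    have := hχs hx
    rw [h, mul_zero] at this
    exact zero_ne_one this
  have hχinv : ∀ x : ZMod p, χC x⁻¹ = χC x := by
    intro x
    by_cases hx : x = 0
    · rw [hx, inv_zero]
    · have h1 : χC x⁻¹ * χC x = 1 := by rw [← map_mul, inv_mul_cancel₀ hx, map_one]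
      exact mul_right_cancel₀ (hχne hx) (h1.trans (hχs hx).symm)
  have hχn1 : χC (-1 : ZMod p) = 1 := by
    rw [← hρ2, MulChar.pow_apply' ρ (by norm_num : (2:ℕ) ≠ 0) (-1 : ZMod p), sq, ← map_mul,
      neg_mul_neg, one_mul, map_one]
  have hρ0 : ρ (0 : ZMod p) = 0 := by
    exact ρ.map_nonunit (by simpa using not_isUnit_zero)
  have hρsq : ∀ x : ZMod p, ρ x * ρ x = χC x := by
    intro x
    rw [← sq, ← MulChar.pow_apply' ρ (by norm_num : (2:ℕ) ≠ 0) x, hρ2]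
  have hρinv : ∀ x : ZMod p, ρ x⁻¹ = χC x * ρ x := by
    intro x
    by_cases hx : x = 0
    · rw [hx, inv_zero, hρ0, mul_zero]
    · have hu : ρ x * ρ x⁻¹ = 1 := by rw [← map_mul, mul_inv_cancel₀ hx, map_one]
      have hne : ρ x ≠ 0 := left_ne_zero_of_mul_eq_one hu
      apply mul_left_cancel₀ hne
      rw [hu]
      symm
      calc ρ x * (χC x * ρ x) = χC x * (ρ x * ρ x) := by ring
        _ = χC x * χC x := by rw [hρsq]
        _ = 1 := hχs hx
  have ψadd : ∀ a b : ZMod p, ψ (a + b) = ψ a * ψ b := fun a b => ψ.map_add_eq_mul a b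
  have ψ0 : ψ (0 : ZMod p) = 1 := ψ.map_zero_eq_one
  -- abbreviations
  set c : ZMod p := (16 * A)⁻¹ * B ^ 2 with hc
  set L : ℂ := ∑ x : ZMod p, χC x * ψ (A * x ^ 2 + B * x) with hL
  set T : ℂ := ∑ b : (ZMod p)ˣ, ρ (b : ZMod p) * ψ (c * ((b : ZMod p) + ((b : ZMod p))⁻¹)) with hT
  set M : ℂ := χC (A * B) * ψ (-B ^ 2 * (8 * A)⁻¹) with hM
  show L = M * T
  have h16A : (16 * A : ZMod p) ≠ 0 := mul_ne_zero h16 hA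
  have h8A : (8 * A : ZMod p) ≠ 0 := mul_ne_zero h8 hA
  -- the unit sum as a full sum
  have hTfull : T = ∑ x : ZMod p, ρ x * ψ (c * (x + x⁻¹)) := by
    rw [hT]
    exact aux_units_sum (fun x => ρ x * ψ (c * (x + x⁻¹))) (by simp [hρ0])
  have claim1 : (2:ℂ) * T = ∑ y : ZMod p, χC y * ψ (c * (y ^ 2 + (y ^ 2)⁻¹)) := by
    have hTinv : T = ∑ x : ZMod p, (χC x * ρ x) * ψ (c * (x + x⁻¹)) := by
      rw [hTfull]
      refine Fintype.sum_bijective (fun x : ZMod p => x⁻¹) inv_bij _ _ ?_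
      intro x
      by_cases hx : x = 0
      · subst hx; simp [hρ0, hχ0]
      · simp only [inv_inv]
        rw [hχinv, hρinv, add_comm x⁻¹ x, ← mul_assoc, hχs hx, one_mul]
    have h2T : (2:ℂ) * T = ∑ x : ZMod p, (1 + χC x) * (ρ x * ψ (c * (x + x⁻¹))) := by
      calc (2:ℂ) * T
          = (∑ x : ZMod p, ρ x * ψ (c * (x + x⁻¹)))
            + ∑ x : ZMod p, (χC x * ρ x) * ψ (c * (x + x⁻¹)) := by
            rw [two_mul, ← hTfull, ← hTinv]
        _ = ∑ x : ZMod p, (1 + χC x) * (ρ x * ψ (c * (x + x⁻¹))) := by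
            rw [← Finset.sum_add_distrib]
            exact Finset.sum_congr rfl fun x _ => by ring
    rw [h2T, ← aux_sq_sum hp2 χC hχdef (fun x => ρ x * ψ (c * (x + x⁻¹)))]
    refine Finset.sum_congr rfl fun y _ => ?_
    congr 1
    rw [sq, map_mul, hρsq]
  have claim2 : M * ((2:ℂ) * T) = ∑ y : ZMod p, χC (A*B) * χC y * ψ (c * (y - y⁻¹) ^ 2) := by
    rw [claim1, Finset.mul_sum]
    refine Finset.sum_congr rfl fun y _ => ?_
    by_cases hy : y = 0
    · subst hy; simp [hχ0, hM]
    · rw [hM]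
      have harg : (-B ^ 2 * (8 * A)⁻¹) + c * (y ^ 2 + (y ^ 2)⁻¹) = c * (y - y⁻¹) ^ 2 := by
        rw [hc]; field_simp; ring
      calc χC (A*B) * ψ (-B ^ 2 * (8 * A)⁻¹) * (χC y * ψ (c * (y ^ 2 + (y ^ 2)⁻¹)))
          = χC (A*B) * χC y * (ψ (-B ^ 2 * (8 * A)⁻¹) * ψ (c * (y ^ 2 + (y ^ 2)⁻¹))) := by ring
        _ = χC (A*B) * χC y * ψ (c * (y - y⁻¹) ^ 2) := by rw [← ψadd, harg]
  have claim3 : ∑ y : ZMod p, χC (A*B) * χC y * ψ (c * (y - y⁻¹) ^ 2)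
      = ∑ y : (ZMod p)ˣ, χC (A*B) * χC (y : ZMod p)
          * ψ (c * ((y : ZMod p) - ((y : ZMod p))⁻¹) ^ 2) :=
    (aux_units_sum (fun x => χC (A*B) * χC x * ψ (c * (x - x⁻¹) ^ 2)) (by simp [hχ0])).symm
  set G : ZMod p → ℂ := fun s => χC (A*B) * χC (s - 2) * ψ (c * (s ^ 2 - 4)) with hG
  have claim4 : ∑ y : (ZMod p)ˣ, χC (A*B) * χC (y : ZMod p)
        * ψ (c * ((y : ZMod p) - ((y : ZMod p))⁻¹) ^ 2)
      = (∑ y : (ZMod p)ˣ, G ((y : ZMod p) + ((y : ZMod p))⁻¹)) + χC (A*B) := by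
    have hpt : ∀ y : (ZMod p)ˣ, χC (A*B) * χC (y : ZMod p)
        * ψ (c * ((y : ZMod p) - ((y : ZMod p))⁻¹) ^ 2)
        = G ((y : ZMod p) + ((y : ZMod p))⁻¹) + (if y = 1 then χC (A*B) else 0) := by
      intro y
      have hy0 : (y : ZMod p) ≠ 0 := Units.ne_zero y
      by_cases hy1 : y = 1
      · subst hy1
        simp only [Units.val_one, inv_one, if_pos]
        rw [hG]
        simp only []
        norm_num [hχ0, ψ0, map_one]
      · rw [if_neg hy1, add_zero, hG]
        simp only []
        have hy1' : (y : ZMod p) ≠ 1 := fun h => hy1 (Units.ext h)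
        have harg2 : ((y : ZMod p) + ((y : ZMod p))⁻¹) ^ 2 - 4
            = ((y : ZMod p) - ((y : ZMod p))⁻¹) ^ 2 := by field_simp; ring
        have hs2 : ((y : ZMod p) + ((y : ZMod p))⁻¹) - 2
            = ((y : ZMod p))⁻¹ * ((y : ZMod p) - 1) ^ 2 := by field_simp; ring
        rw [harg2, hs2, map_mul χC ((y : ZMod p))⁻¹ (((y : ZMod p) - 1) ^ 2), hχinv,
          hχsq (sub_ne_zero.mpr hy1')]
        ring
    rw [Finset.sum_congr rfl (fun y _ => hpt y), Finset.sum_add_distrib,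
      Finset.sum_ite_eq' Finset.univ (1 : (ZMod p)ˣ) (fun _ => χC (A*B))]
    rw [if_pos (Finset.mem_univ _)]
  have claim5 : (∑ y : (ZMod p)ˣ, G ((y : ZMod p) + ((y : ZMod p))⁻¹))
      = ∑ s : ZMod p, (1 + χC (s ^ 2 - 4)) * G s :=
    aux_inv_param hp2 χC hχdef G
  have hslope : (4 * A * B⁻¹ : ZMod p) ≠ 0 :=
    mul_ne_zero (mul_ne_zero h4 hA) (inv_ne_zero hB)
  have claim6 : ∑ s : ZMod p, (1 + χC (s ^ 2 - 4)) * G s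
      = ∑ x : ZMod p, (1 + χC ((4*A*B⁻¹*x + 2) ^ 2 - 4)) * G (4*A*B⁻¹*x + 2) :=
    (Fintype.sum_bijective _ (affine_bij hslope 2)
      (fun x => (1 + χC ((4*A*B⁻¹*x + 2) ^ 2 - 4)) * G (4*A*B⁻¹*x + 2))
      (fun s => (1 + χC (s ^ 2 - 4)) * G s) (fun x => rfl)).symm
  have claim7 : ∀ x : ZMod p, (1 + χC ((4*A*B⁻¹*x + 2) ^ 2 - 4)) * G (4*A*B⁻¹*x + 2)
      = χC x * ψ (A * x ^ 2 + B * x)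
        + χC A * ((χC x * χC x) * (χC (A*x + B) * ψ (A * x ^ 2 + B * x))) := by
    intro x
    have e2 : (4*A*B⁻¹*x + 2) ^ 2 - 4 = (A * (x * (A*x + B))) * (4*B⁻¹) ^ 2 := by
      field_simp; ring
    have e3 : c * ((4*A*B⁻¹*x + 2) ^ 2 - 4) = A * x ^ 2 + B * x := by
      rw [hc]; field_simp; ring
    have e1 : (4*A*B⁻¹*x + 2) - 2 = (4*A*B⁻¹) * x := by ring
    have e4 : (A*B) * (4*A*B⁻¹) = (2*A) ^ 2 := by field_simp; ring
    have hv1 : χC ((4*A*B⁻¹*x + 2) ^ 2 - 4) = χC A * χC x * χC (A*x + B) := by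
      rw [e2, map_mul, map_mul, map_mul, hχsq (mul_ne_zero h4 (inv_ne_zero hB))]
      ring
    have hv3 : χC (A*B) * χC (4*A*B⁻¹) = 1 := by
      rw [← map_mul, e4]; exact hχsq (mul_ne_zero h2 hA)
    rw [hG]
    simp only []
    rw [e3, e1, map_mul χC (4*A*B⁻¹) x, hv1]
    linear_combination ((1 + χC A * χC x * χC (A*x + B)) * χC x * ψ (A * x ^ 2 + B * x)) * hv3
  have claim8 : ∑ x : ZMod p, (χC x * χC x) * (χC (A*x + B) * ψ (A * x ^ 2 + B * x))
      = (∑ x : ZMod p, χC (A*x + B) * ψ (A * x ^ 2 + B * x)) - χC B := by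
    have hpt : ∀ x : ZMod p, (χC x * χC x) * (χC (A*x + B) * ψ (A * x ^ 2 + B * x))
        = χC (A*x + B) * ψ (A * x ^ 2 + B * x) - (if x = 0 then χC B else 0) := by
      intro x
      by_cases hx : x = 0
      · subst hx; simp [hχ0, ψ0]
      · rw [if_neg hx, hχs hx, one_mul, sub_zero]
    rw [Finset.sum_congr rfl fun x _ => hpt x, Finset.sum_sub_distrib,
      Finset.sum_ite_eq' Finset.univ (0 : ZMod p) (fun _ => χC B)]
    rw [if_pos (Finset.mem_univ _)]
  have claim9 : ∑ x : ZMod p, χC (A*x + B) * ψ (A * x ^ 2 + B * x) = χC A * L := by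
    rw [hL, Finset.mul_sum]
    have hbij' : Function.Bijective (fun x : ZMod p => -x - B * A⁻¹) := by
      have hfe : (fun x : ZMod p => -1 * x + -(B * A⁻¹)) = fun x : ZMod p => -x - B * A⁻¹ := by
        funext x; ring
      rw [← hfe]; exact affine_bij (neg_ne_zero.mpr one_ne_zero) _
    refine (Fintype.sum_bijective _ hbij' _ _ ?_).symm
    intro x
    have ea : A * (-x - B * A⁻¹) + B = (-1 : ZMod p) * (A * x) := by
      field_simp
      ring
    have eb : A * (-x - B * A⁻¹) ^ 2 + B * (-x - B * A⁻¹) = A * x ^ 2 + B * x := by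
      field_simp; ring
    rw [ea, eb, map_mul, map_mul, hχn1, one_mul]
    ring
  -- final assembly
  have final : (2:ℂ) * (M * T) = 2 * L := by
    calc (2:ℂ) * (M * T) = M * (2 * T) := by ring
      _ = ∑ y : ZMod p, χC (A*B) * χC y * ψ (c * (y - y⁻¹) ^ 2) := claim2
      _ = ∑ y : (ZMod p)ˣ, χC (A*B) * χC (y : ZMod p)
            * ψ (c * ((y : ZMod p) - ((y : ZMod p))⁻¹) ^ 2) := claim3
      _ = (∑ y : (ZMod p)ˣ, G ((y : ZMod p) + ((y : ZMod p))⁻¹)) + χC (A*B) := claim4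
      _ = (∑ s : ZMod p, (1 + χC (s ^ 2 - 4)) * G s) + χC (A*B) := by rw [claim5]
      _ = (∑ x : ZMod p, (1 + χC ((4*A*B⁻¹*x + 2) ^ 2 - 4)) * G (4*A*B⁻¹*x + 2)) + χC (A*B) := by
            rw [claim6]
      _ = (∑ x : ZMod p, (χC x * ψ (A * x ^ 2 + B * x)
            + χC A * ((χC x * χC x) * (χC (A*x + B) * ψ (A * x ^ 2 + B * x))))) + χC (A*B) := by
            rw [Finset.sum_congr rfl fun x _ => claim7 x]
      _ = (L + χC A * ∑ x : ZMod p, (χC x * χC x) * (χC (A*x + B) * ψ (A * x ^ 2 + B * x)))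
            + χC (A*B) := by
            rw [Finset.sum_add_distrib, ← Finset.mul_sum, ← hL]
      _ = (L + χC A * ((χC A * L) - χC B)) + χC (A*B) := by rw [claim8, claim9]
      _ = 2 * L := by
            rw [mul_sub, ← mul_assoc, hχs hA, one_mul, ← map_mul]
            ring
  exact (mul_left_cancel₀ two_ne_zero final).symm
end
end

section
/- Let p be an odd prime, ψ a nontrivial additive character of F_p, χ₂ the quadratic character, and η, τ denote Gauss sums τ(χ) = ∑_{x∈F_p×} χ(x)ψ(x). Then for any character χ of F_p× one has the Hasse–Davenport product relation τ(χ²) · τ(χ₂) = χ(4) · τ(χ) · τ(χ·χ₂) (whenever χ² is nontrivial). -/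
open scoped BigOperators

noncomputable section

open Finset in
lemma jac_key {p : ℕ} [Fact p.Prime] (hp : p ≠ 2) (χ : MulChar (ZMod p) ℂ) (hχ : χ ≠ 1) :
    jacobiSum χ ((quadraticChar (ZMod p)).ringHomComp (Int.castRingHom ℂ)) =
      χ 4 * jacobiSum χ χ := by
  classical
  have hrc : ringChar (ZMod p) ≠ 2 := by rw [ZMod.ringChar_zmod_n]; exact_mod_cast hp
  have h2 : (2 : ZMod p) ≠ 0 := by simpa using (Ring.two_ne_zero hrc)
  set χ₂ := (quadraticChar (ZMod p)).ringHomComp (Int.castRingHom ℂ) with hχ₂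
  have step1 : χ 4 * jacobiSum χ χ = ∑ t : ZMod p, χ (1 - t ^ 2) := by
    rw [jacobiSum, Finset.mul_sum]
    have h1 : ∀ x : ZMod p, χ 4 * (χ x * χ (1 - x)) = χ (4 * (x * (1 - x))) := by
      intro x; rw [map_mul, map_mul]
    simp_rw [h1]
    let e : ZMod p ≃ ZMod p :=
      (Equiv.addLeft (1 : ZMod p)).trans (Equiv.mulRight₀ (2⁻¹ : ZMod p) (inv_ne_zero h2))
    rw [← Equiv.sum_comp e (fun x => χ (4 * (x * (1 - x))))]
    refine Finset.sum_congr rfl fun t _ => ?_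
    congr 1
    show 4 * ((1 + t) * 2⁻¹ * (1 - (1 + t) * 2⁻¹)) = 1 - t ^ 2
    field_simp
    ring
  have step2 : ∑ t : ZMod p, χ (1 - t ^ 2)
      = ∑ u : ZMod p, (χ₂ u + 1) * χ (1 - u) := by
    rw [← Finset.sum_fiberwise' univ (fun t : ZMod p => t ^ 2) (fun u => χ (1 - u))]
    refine Finset.sum_congr rfl fun u _ => ?_
    rw [Finset.sum_const, nsmul_eq_mul]
    congr 1
    have hcard := quadraticChar_card_sqrts hrc u
    have : ({x : ZMod p | x ^ 2 = u}.toFinset) = univ.filter (fun t : ZMod p => t ^ 2 = u) := by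
      simp [Set.toFinset_setOf]
    rw [this] at hcard
    have : ((univ.filter (fun t : ZMod p => t ^ 2 = u)).card : ℂ)
        = (((quadraticChar (ZMod p) u : ℤ) : ℂ) + 1) := by
      exact_mod_cast congrArg (Int.cast : ℤ → ℂ) hcard
    rw [this, hχ₂]
    simp [MulChar.ringHomComp_apply]
  have step3 : ∑ u : ZMod p, (χ₂ u + 1) * χ (1 - u) = jacobiSum χ χ₂ := by
    simp_rw [add_mul, one_mul]
    rw [Finset.sum_add_distrib]
    have hz : ∑ u : ZMod p, χ (1 - u) = 0 := by
      have h := Equiv.sum_comp (Equiv.subLeft (1 : ZMod p)) (fun v => χ v)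
      simp only [Equiv.subLeft_apply] at h
      rw [h]
      exact MulChar.sum_eq_zero_of_ne_one hχ
    rw [hz, add_zero, ← jacobiSum, jacobiSum_comm]
  rw [step1, step2, step3]

/-- Hasse–Davenport product relation for `n = 2`:
`τ(χ²) τ(χ₂) = χ(4) τ(χ) τ(χ χ₂)` when `χ²` is nontrivial. -/
theorem stmt_4 {p : ℕ} [Fact p.Prime] (hp : p ≠ 2)
    (ψ : AddChar (ZMod p) ℂ) (hψ : ψ ≠ 1)
    (χ : MulChar (ZMod p) ℂ) (hχ : χ ^ 2 ≠ 1) :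
    gaussSum (χ ^ 2) ψ *
        gaussSum ((quadraticChar (ZMod p)).ringHomComp (Int.castRingHom ℂ)) ψ =
      χ 4 * gaussSum χ ψ *
        gaussSum (χ * (quadraticChar (ZMod p)).ringHomComp (Int.castRingHom ℂ)) ψ := by
  classical
  set χ₂ := (quadraticChar (ZMod p)).ringHomComp (Int.castRingHom ℂ) with hχ₂def
  have hrc : ringChar (ZMod p) ≠ 2 := by rw [ZMod.ringChar_zmod_n]; exact_mod_cast hp
  have hχ1 : χ ≠ 1 := fun h => hχ (by rw [h, one_pow])
  have hq : χ₂ ≠ 1 := by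
    rw [hχ₂def]
    exact (MulChar.ringHomComp_ne_one_iff (RingHom.injective_int _)).mpr
      (quadraticChar_ne_one hrc)
  have hqsq : χ₂ * χ₂ = 1 := by
    rw [hχ₂def, ← MulChar.ringHomComp_mul]
    have : quadraticChar (ZMod p) * quadraticChar (ZMod p) = 1 := by
      ext a
      simp only [MulChar.mul_apply, MulChar.one_apply_coe]
      rw [← pow_two]
      exact quadraticChar_sq_one a.ne_zero
    rw [this, MulChar.ringHomComp_one]
  have hχq : χ * χ₂ ≠ 1 := by
    intro h
    apply hχ
    have : χ = χ₂ := by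
      have := congrArg (· * χ₂) h
      simpa [mul_assoc, hqsq] using this
    rw [this, pow_two, hqsq]
  have hχχ : χ * χ ≠ 1 := by rwa [← pow_two]
  have hprim : ψ.IsPrimitive := AddChar.IsPrimitive.of_ne_one hψ
  have hcard : ((Fintype.card (ZMod p) : ℂ)) ≠ 0 := by
    rw [ZMod.card]
    exact_mod_cast (Fact.out (p := p.Prime)).ne_zero
  have gχ : gaussSum χ ψ ≠ 0 := gaussSum_ne_zero_of_nontrivial hcard hχ1 hprim
  have gq : gaussSum χ₂ ψ ≠ 0 := gaussSum_ne_zero_of_nontrivial hcard hq hprim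
  have h1 := jacobiSum_mul_nontrivial hχχ ψ
  have h2 := jacobiSum_mul_nontrivial hχq ψ
  have key := jac_key hp χ hχ1
  have hJ : jacobiSum χ χ ≠ 0 := by
    intro h
    rw [h, mul_zero] at h1
    exact mul_ne_zero gχ gχ h1.symm
  apply mul_right_cancel₀ hJ
  rw [← hχ₂def] at *
  calc gaussSum (χ ^ 2) ψ * gaussSum χ₂ ψ * jacobiSum χ χ
      = (gaussSum (χ * χ) ψ * jacobiSum χ χ) * gaussSum χ₂ ψ := by rw [pow_two]; ring
    _ = (gaussSum χ ψ * gaussSum χ ψ) * gaussSum χ₂ ψ := by rw [h1]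
    _ = gaussSum χ ψ * (gaussSum χ ψ * gaussSum χ₂ ψ) := by ring
    _ = gaussSum χ ψ * (gaussSum (χ * χ₂) ψ * jacobiSum χ χ₂) := by rw [h2]
    _ = gaussSum χ ψ * (gaussSum (χ * χ₂) ψ * (χ 4 * jacobiSum χ χ)) := by rw [key]
    _ = χ 4 * gaussSum χ ψ * gaussSum (χ * χ₂) ψ * jacobiSum χ χ := by ring
end
end

section
/- Let p ≡ 1 (mod 4) be prime, ψ a nontrivial additive character of F_p, ρ a quartic character of F_p×, and A, B ∈ F_p× with A, B squares in F_p× and 2 a square in F_p. Then the quartic-twisted Salié sum evaluates on the diagonal inputs: χ₂(AB) ψ(−B²(8A)⁻¹) ∑_{b∈F_p×} ρ(b) ψ((16A)⁻¹B²(b + b⁻¹)) = ∑_{x∈F_p} ψ(Ax⁴ + Bx²) − ∑_{x∈F_p} ψ(Ax² + Bx). -/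
open scoped BigOperators
open Finset

noncomputable section

def qcc (p : ℕ) [Fact p.Prime] : MulChar (ZMod p) ℂ :=
  (quadraticChar (ZMod p)).ringHomComp (Int.castRingHom ℂ)

variable {p : ℕ} [Fact p.Prime]

lemma qcc_apply (a : ZMod p) : qcc p a = ((quadraticChar (ZMod p) a : ℤ) : ℂ) := rfl

lemma qcc_zero : qcc p 0 = 0 := (qcc p).map_nonunit not_isUnit_zero

lemma qcc_mul (a b : ZMod p) : qcc p (a * b) = qcc p a * qcc p b := map_mul _ _ _

lemma qcc_sq_one {a : ZMod p} (ha : a ≠ 0) : qcc p a * qcc p a = 1 := by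
  have := quadraticChar_sq_one ha
  rw [qcc_apply]
  rw [← Int.cast_mul, ← sq, this]
  norm_num

lemma qcc_ne_zero {a : ZMod p} (ha : a ≠ 0) : qcc p a ≠ 0 := by
  intro h
  have := qcc_sq_one ha
  rw [h, mul_zero] at this
  exact zero_ne_one this

lemma qcc_sq' {a : ZMod p} (ha : a ≠ 0) : qcc p (a ^ 2) = 1 := by
  rw [sq, qcc_mul, qcc_sq_one ha]

lemma qcc_inv (a : ZMod p) : qcc p a⁻¹ = qcc p a := by
  by_cases ha : a = 0
  · rw [ha, inv_zero]
  · have h1 : qcc p a⁻¹ * qcc p a = 1 := by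
      rw [← qcc_mul, inv_mul_cancel₀ ha, map_one]
    have h2 := qcc_sq_one ha
    exact mul_right_cancel₀ (qcc_ne_zero ha) (h1.trans h2.symm)

lemma p_odd (hp : p % 4 = 1) : p ≠ 2 := by
  intro h; rw [h] at hp; norm_num at hp

lemma zTwo_ne_zero (hp : p % 4 = 1) : (2 : ZMod p) ≠ 0 := by
  have : ringChar (ZMod p) ≠ 2 := by
    rw [ZMod.ringChar_zmod_n]; exact_mod_cast p_odd hp
  exact Ring.two_ne_zero this

lemma zFour_ne_zero (hp : p % 4 = 1) : (4 : ZMod p) ≠ 0 := by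
  have h2 := zTwo_ne_zero hp
  have : (4 : ZMod p) = 2 * 2 := by norm_num
  rw [this]; exact mul_ne_zero h2 h2

lemma qcc_neg_one (hp : p % 4 = 1) : qcc p (-1) = 1 := by
  have hsq : IsSquare (-1 : ZMod p) := ZMod.exists_sq_eq_neg_one_iff.mpr (by omega)
  have hne : (-1 : ZMod p) ≠ 0 := by
    intro h
    have : (1 : ZMod p) = 0 := by linear_combination -h
    exact one_ne_zero this
  rw [qcc_apply, (quadraticChar_one_iff_isSquare hne).mpr hsq]
  norm_num

lemma qcc_four (hp : p % 4 = 1) : qcc p 4 = 1 := by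
  have : (4 : ZMod p) = 2 ^ 2 := by norm_num
  rw [this, qcc_sq' (zTwo_ne_zero hp)]

/-- counting lemma: sum over squares -/
lemma count_sq (hp : p % 4 = 1) (f : ZMod p → ℂ) :
    ∑ x : ZMod p, f (x ^ 2) = ∑ t : ZMod p, (1 + qcc p t) * f t := by
  have hchar : ringChar (ZMod p) ≠ 2 := by
    rw [ZMod.ringChar_zmod_n]; exact_mod_cast p_odd hp
  rw [← Finset.sum_fiberwise Finset.univ (fun x : ZMod p => x ^ 2) (fun x => f (x ^ 2))]
  refine Finset.sum_congr rfl fun t _ => ?_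
  have : ∀ x ∈ Finset.univ.filter (fun x : ZMod p => x ^ 2 = t), f (x ^ 2) = f t := by
    intro x hx
    rw [Finset.mem_filter] at hx
    rw [hx.2]
  rw [Finset.sum_congr rfl this, Finset.sum_const, nsmul_eq_mul]
  congr 1
  have hc := quadraticChar_card_sqrts hchar t
  rw [Set.toFinset_setOf] at hc
  have : ((#(Finset.univ.filter (fun x : ZMod p => x ^ 2 = t)) : ℤ) : ℂ)
      = ((quadraticChar (ZMod p) t + 1 : ℤ) : ℂ) := by rw [hc]
  push_cast at this
  rw [this, qcc_apply, add_comm]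


lemma star_fiber (hp : p % 4 = 1) (u : ZMod p) :
    ∑ v ∈ Finset.univ.filter (fun v : ZMod p => v + v⁻¹ - 2 = u), qcc p v
      = qcc p u + qcc p (u + 4) := by
  have h2 := zTwo_ne_zero (p := p) hp
  have h4 := zFour_ne_zero (p := p) hp
  by_cases hu0 : u = 0
  · subst hu0
    have hset : Finset.univ.filter (fun v : ZMod p => v + v⁻¹ - 2 = 0) = {1} := by
      ext v
      simp only [Finset.mem_filter, Finset.mem_univ, true_and, Finset.mem_singleton]
      constructor
      · intro h
        by_cases hv : v = 0
        · exfalso; rw [hv, inv_zero] at h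
          exact h2 (by linear_combination -h)
        · field_simp at h
          have hv2 : (v - 1) ^ 2 = 0 := by linear_combination h
          have := sq_eq_zero_iff.mp hv2
          linear_combination this
      · intro h; subst h; norm_num
    rw [hset, Finset.sum_singleton, map_one, qcc_zero, zero_add, zero_add, qcc_four hp]
  by_cases hu4 : u = -4
  · subst hu4
    have hset : Finset.univ.filter (fun v : ZMod p => v + v⁻¹ - 2 = -4) = {-1} := by
      ext v
      simp only [Finset.mem_filter, Finset.mem_univ, true_and, Finset.mem_singleton]
      constructor
      · intro h
        by_cases hv : v = 0
        · exfalso; rw [hv, inv_zero] at h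
          exact h2 (by linear_combination h)
        · field_simp at h
          have hv2 : (v + 1) ^ 2 = 0 := by linear_combination h
          have := sq_eq_zero_iff.mp hv2
          linear_combination this
      · intro h; subst h; norm_num
    rw [hset, Finset.sum_singleton]
    have : (-4 : ZMod p) + 4 = 0 := by ring
    rw [this, qcc_zero, add_zero]
    have h4' : (-4 : ZMod p) = (-1) * 4 := by ring
    rw [h4', qcc_mul, qcc_neg_one hp, qcc_four hp]
    norm_num
  · -- general case
    have hu4' : u + 4 ≠ 0 := fun h => hu4 (by linear_combination h)
    set S := Finset.univ.filter (fun v : ZMod p => v + v⁻¹ - 2 = u) with hS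
    have hfil : ∑ v ∈ S.filter (fun v => v ≠ 0), qcc p v = ∑ v ∈ S, qcc p v := by
      apply Finset.sum_filter_of_ne
      intro v _ hv h0
      exact hv (h0 ▸ qcc_zero)
    rw [← hfil]
    have hcong : ∀ v ∈ S.filter (fun v => v ≠ 0), qcc p v = qcc p u := by
      intro v hv
      rw [Finset.mem_filter] at hv
      obtain ⟨hvS, hv0⟩ := hv
      rw [hS, Finset.mem_filter] at hvS
      have heq : v + v⁻¹ - 2 = u := hvS.2
      have hv1 : v ≠ 1 := by
        intro h; subst h; apply hu0; rw [← heq]; norm_num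
      have hueq : u = (v - 1) ^ 2 * v⁻¹ := by
        field_simp
        field_simp at heq
        linear_combination -heq
      rw [hueq, qcc_mul, qcc_sq' (sub_ne_zero.mpr hv1), qcc_inv, one_mul]
    rw [Finset.sum_congr rfl hcong, Finset.sum_const, nsmul_eq_mul]
    have hcard : #(S.filter (fun v => v ≠ 0))
        = #(Finset.univ.filter (fun w : ZMod p => w ^ 2 = u ^ 2 + 4 * u)) := by
      apply Finset.card_bij (fun v _ => 2 * v - (u + 2))
      · intro v hv
        rw [Finset.mem_filter] at hv ⊢
        obtain ⟨hvS, hv0⟩ := hv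
        rw [hS, Finset.mem_filter] at hvS
        have heq := hvS.2
        field_simp at heq
        refine ⟨Finset.mem_univ _, ?_⟩
        linear_combination 4 * heq
      · intro v1 h1 v2 h2' hi
        have : (2 : ZMod p) * v1 = 2 * v2 := by linear_combination hi
        exact mul_left_cancel₀ h2 this
      · intro w hw
        rw [Finset.mem_filter] at hw
        obtain ⟨-, hw2⟩ := hw
        set v : ZMod p := (w + u + 2) * 2⁻¹ with hvdef
        have h2v : 2 * v = w + u + 2 := by
          rw [hvdef]; field_simp
        have hv0 : v ≠ 0 := by
          intro h0
          have hw' : w = -(u + 2) := by linear_combination -h2v + 2 * h0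
          apply h4
          rw [hw'] at hw2
          linear_combination hw2
        have hq4 : (2 * v) * (2 * (u + 2) - 2 * v) = 4 := by
          rw [h2v]; linear_combination -hw2
        have hq : v * ((u + 2) - v) = 1 := by
          apply mul_left_cancel₀ h4
          linear_combination hq4
        have hvinv : v⁻¹ = (u + 2) - v := inv_eq_of_mul_eq_one_right hq
        refine ⟨v, ?_, ?_⟩
        · rw [Finset.mem_filter, hS, Finset.mem_filter]
          refine ⟨⟨Finset.mem_univ _, ?_⟩, hv0⟩
          rw [hvinv]; ring
        · linear_combination h2v
    rw [hcard]
    have hchar : ringChar (ZMod p) ≠ 2 := by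
      rw [ZMod.ringChar_zmod_n]; exact_mod_cast p_odd hp
    have hc := quadraticChar_card_sqrts hchar (u ^ 2 + 4 * u)
    rw [Set.toFinset_setOf] at hc
    have hcC : ((#(Finset.univ.filter (fun w : ZMod p => w ^ 2 = u ^ 2 + 4 * u)) : ℕ) : ℂ)
        = qcc p (u ^ 2 + 4 * u) + 1 := by
      have : ((#(Finset.univ.filter (fun w : ZMod p => w ^ 2 = u ^ 2 + 4 * u)) : ℤ) : ℂ)
          = ((quadraticChar (ZMod p) (u ^ 2 + 4 * u) + 1 : ℤ) : ℂ) := by rw [hc]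
      push_cast at this
      rw [qcc_apply]
      exact_mod_cast this
    rw [hcC]
    have : u ^ 2 + 4 * u = u * (u + 4) := by ring
    rw [this, qcc_mul]
    have h1 := qcc_sq_one (p := p) hu0
    linear_combination (qcc p (u+4)) * h1


/-- Diagonal evaluation of the quartic-twisted Salié sum:
`χ₂(AB) ψ(−B²(8A)⁻¹) ∑_b ρ(b) ψ((16A)⁻¹B²(b+b⁻¹)) = ∑ₓ ψ(Ax⁴+Bx²) − ∑ₓ ψ(Ax²+Bx)`. -/
theorem stmt_15 {p : ℕ} [Fact p.Prime] (hp : p % 4 = 1)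
    (ψ : AddChar (ZMod p) ℂ) (hψ : ψ ≠ 1)
    (ρ : MulChar (ZMod p) ℂ) (hρ : orderOf ρ = 4)
    (hρ2 : ρ ^ 2 = (quadraticChar (ZMod p)).ringHomComp (Int.castRingHom ℂ))
    (h2 : IsSquare (2 : ZMod p))
    (A B : ZMod p) (hA0 : A ≠ 0) (hAsq : IsSquare A) (hB0 : B ≠ 0) (hBsq : IsSquare B) :
    ((quadraticChar (ZMod p) (A * B) : ℤ) : ℂ) * ψ (-B ^ 2 * (8 * A)⁻¹) *
        ∑ b : (ZMod p)ˣ,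
          ρ (b : ZMod p) * ψ ((16 * A)⁻¹ * B ^ 2 * ((b : ZMod p) + ((b : ZMod p))⁻¹)) =
      (∑ x : ZMod p, ψ (A * x ^ 4 + B * x ^ 2)) - ∑ x : ZMod p, ψ (A * x ^ 2 + B * x) := by
  have hρ2' : ρ ^ 2 = qcc p := hρ2
  have h2z := zTwo_ne_zero (p := p) hp
  have h4z := zFour_ne_zero (p := p) hp
  have h8z : (8 : ZMod p) ≠ 0 := by
    have h : (8 : ZMod p) = 2 * 4 := by norm_num
    rw [h]; exact mul_ne_zero h2z h4z
  have h16z : (16 : ZMod p) ≠ 0 := by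
    have h : (16 : ZMod p) = 4 * 4 := by norm_num
    rw [h]; exact mul_ne_zero h4z h4z
  have hAB0 : A * B ≠ 0 := mul_ne_zero hA0 hB0
  set c : ZMod p := (16 * A)⁻¹ * B ^ 2 with hc
  set T : ℂ := ∑ u : ZMod p, qcc p u * ψ (c * (u ^ 2 + 4 * u)) with hT
  set Sρ : ℂ := ∑ b : ZMod p, ρ b * ψ (c * (b + b⁻¹)) with hSρ
  set W : ℂ := ∑ v : ZMod p, qcc p v * ψ (c * ((v + v⁻¹) ^ 2 - 4)) with hW
  set W' : ℂ := ∑ v : ZMod p, qcc p v * ψ (c * (v ^ 2 + (v ^ 2)⁻¹)) with hW'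
  -- ρ kills 0
  have hρ0 : ρ (0 : ZMod p) = 0 := ρ.map_nonunit not_isUnit_zero
  -- Step 1: units sum equals full sum
  have h_units : (∑ b : (ZMod p)ˣ,
      ρ (b : ZMod p) * ψ (c * ((b : ZMod p) + ((b : ZMod p))⁻¹))) = Sρ := by
    rw [hSρ]
    have e1 : ∑ b : ZMod p, ρ b * ψ (c * (b + b⁻¹))
        = ∑ b ∈ Finset.univ.filter (fun b : ZMod p => b ≠ 0), ρ b * ψ (c * (b + b⁻¹)) := by
      symm
      apply Finset.sum_subset (Finset.filter_subset _ _)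
      intro x _ hx
      simp only [Finset.mem_filter, Finset.mem_univ, true_and, not_not] at hx
      rw [hx, hρ0, zero_mul]
    rw [e1, Finset.sum_subtype (p := fun b : ZMod p => b ≠ 0) _ (fun x => by simp) (fun b : ZMod p => ρ b * ψ (c * (b + b⁻¹)))]
    rw [← Equiv.sum_comp (unitsEquivNeZero (G₀ := ZMod p))
      (fun x : {a : ZMod p // a ≠ 0} => ρ (x : ZMod p) * ψ (c * ((x : ZMod p) + (x : ZMod p)⁻¹)))]
    simp only [unitsEquivNeZero_apply_coe]
  -- Step 2: RHS reduction
  have h_rhs : (∑ x : ZMod p, ψ (A * x ^ 4 + B * x ^ 2)) - (∑ x : ZMod p, ψ (A * x ^ 2 + B * x))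
      = ∑ t : ZMod p, qcc p t * ψ (A * t ^ 2 + B * t) := by
    have e1 : (∑ x : ZMod p, ψ (A * x ^ 4 + B * x ^ 2))
        = ∑ x : ZMod p, (fun t => ψ (A * t ^ 2 + B * t)) (x ^ 2) := by
      refine Finset.sum_congr rfl fun x _ => ?_
      simp only
      congr 1
      ring
    rw [e1, count_sq hp (fun t => ψ (A * t ^ 2 + B * t))]
    rw [Finset.sum_congr rfl (fun t (_ : t ∈ Finset.univ) =>
      add_mul 1 (qcc p t) (ψ (A * t ^ 2 + B * t))), Finset.sum_add_distrib]
    simp only [one_mul]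
    ring
  -- Step 3: substitution t = d * u
  have h_sub : (∑ t : ZMod p, qcc p t * ψ (A * t ^ 2 + B * t)) = qcc p (A * B) * T := by
    set d : ZMod p := B * (4 * A)⁻¹ with hd
    have hd0 : d ≠ 0 := by
      rw [hd]
      exact mul_ne_zero hB0 (inv_ne_zero (mul_ne_zero h4z hA0))
    have hqd : qcc p d = qcc p (A * B) := by
      have hdq : d * (A * B) = (B * 2⁻¹) ^ 2 := by
        rw [hd]; field_simp; ring
      have h1 : qcc p d * qcc p (A * B) = 1 := by
        rw [← qcc_mul, hdq, qcc_sq' (mul_ne_zero hB0 (inv_ne_zero h2z))]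
      have h2' : qcc p (A * B) * qcc p (A * B) = 1 := qcc_sq_one hAB0
      exact mul_right_cancel₀ (qcc_ne_zero hAB0) (h1.trans h2'.symm)
    have harg : ∀ u : ZMod p, A * (d * u) ^ 2 + B * (d * u) = c * (u ^ 2 + 4 * u) := by
      intro u
      rw [hd, hc]
      field_simp
      ring
    have e1 : (∑ u : ZMod p, qcc p (d * u) * ψ (A * (d * u) ^ 2 + B * (d * u)))
        = ∑ t : ZMod p, qcc p t * ψ (A * t ^ 2 + B * t) :=
      Fintype.sum_bijective (fun u => d * u) (mulLeft_bijective₀ d hd0) _ _ (fun u => rfl)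
    rw [← e1]
    rw [Finset.sum_congr rfl (fun u (_ : u ∈ Finset.univ) => by
      rw [qcc_mul, hqd, harg u, mul_assoc])]
    rw [← Finset.mul_sum, ← hT]
  -- Step 4: W = 2T
  have h_W2T : W = 2 * T := by
    rw [hW]
    rw [← Finset.sum_fiberwise Finset.univ (fun v : ZMod p => v + v⁻¹ - 2)
      (fun v => qcc p v * ψ (c * ((v + v⁻¹) ^ 2 - 4)))]
    have inner : ∀ u : ZMod p,
        (∑ v ∈ Finset.univ.filter (fun v : ZMod p => v + v⁻¹ - 2 = u),
          qcc p v * ψ (c * ((v + v⁻¹) ^ 2 - 4)))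
        = (qcc p u + qcc p (u + 4)) * ψ (c * (u ^ 2 + 4 * u)) := by
      intro u
      have e2 : ∀ v ∈ Finset.univ.filter (fun v : ZMod p => v + v⁻¹ - 2 = u),
          qcc p v * ψ (c * ((v + v⁻¹) ^ 2 - 4)) = qcc p v * ψ (c * (u ^ 2 + 4 * u)) := by
        intro v hv
        rw [Finset.mem_filter] at hv
        have hvu : v + v⁻¹ = u + 2 := by linear_combination hv.2
        rw [show c * ((v + v⁻¹) ^ 2 - 4) = c * (u ^ 2 + 4 * u) by rw [hvu]; ring]
      rw [Finset.sum_congr rfl e2, ← Finset.sum_mul, star_fiber hp u]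
    rw [Finset.sum_congr rfl (fun u (_ : u ∈ Finset.univ) => inner u)]
    rw [Finset.sum_congr rfl (fun u (_ : u ∈ Finset.univ) =>
      add_mul (qcc p u) (qcc p (u + 4)) (ψ (c * (u ^ 2 + 4 * u)))), Finset.sum_add_distrib]
    have hT'' : (∑ u : ZMod p, qcc p (u + 4) * ψ (c * (u ^ 2 + 4 * u))) = T := by
      rw [hT]
      symm
      apply Fintype.sum_bijective (fun w : ZMod p => -w - 4)
        (Function.Involutive.bijective (fun w => by ring))
      intro w
      have e3 : (-w - 4) + 4 = -w := by ring
      have e4 : c * ((-w - 4) ^ 2 + 4 * (-w - 4)) = c * (w ^ 2 + 4 * w) := by ring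
      rw [e3, e4, show (-w : ZMod p) = (-1) * w by ring, qcc_mul, qcc_neg_one hp, one_mul]
    rw [hT'', ← hT]
    ring
  -- Step 5: ψ(-2c) * W' = W
  have h_shift : ψ (-(2 * c)) * W' = W := by
    rw [hW', hW, Finset.mul_sum]
    refine Finset.sum_congr rfl fun v _ => ?_
    by_cases hv : v = 0
    · rw [hv, qcc_zero, zero_mul, mul_zero, zero_mul]
    · have e5 : c * ((v + v⁻¹) ^ 2 - 4) = -(2 * c) + c * (v ^ 2 + (v ^ 2)⁻¹) := by
        field_simp
        ring
      rw [e5, AddChar.map_add_eq_mul]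
      ring
  -- Step 6: W' = 2 * Sρ
  have h_W'2 : W' = 2 * Sρ := by
    have e6 : W' = ∑ v : ZMod p, (fun b => ρ b * ψ (c * (b + b⁻¹))) (v ^ 2) := by
      rw [hW']
      refine Finset.sum_congr rfl fun v _ => ?_
      simp only
      rw [show ρ (v ^ 2) = qcc p v by
        rw [map_pow, ← MulChar.pow_apply' ρ (by norm_num) v, hρ2']]
    rw [e6, count_sq hp (fun b => ρ b * ψ (c * (b + b⁻¹)))]
    rw [Finset.sum_congr rfl (fun b (_ : b ∈ Finset.univ) =>
      add_mul 1 (qcc p b) (ρ b * ψ (c * (b + b⁻¹)))), Finset.sum_add_distrib]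
    simp only [one_mul]
    have e7 : (∑ b : ZMod p, qcc p b * (ρ b * ψ (c * (b + b⁻¹))))
        = ∑ b : ZMod p, ρ b⁻¹ * ψ (c * (b + b⁻¹)) := by
      refine Finset.sum_congr rfl fun b _ => ?_
      by_cases hb : b = 0
      · rw [hb, inv_zero, hρ0, qcc_zero]; ring
      · have hρb0 : ρ b ≠ 0 := by
          intro h0
          have h1 : qcc p b = 0 := by
            rw [← hρ2', MulChar.pow_apply' ρ (by norm_num) b, h0]
            norm_num
          exact qcc_ne_zero hb h1
        have hinv : ρ b⁻¹ * ρ b = 1 := by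
          rw [← map_mul, inv_mul_cancel₀ hb, map_one]
        have hq : qcc p b = ρ b ^ 2 := by
          rw [← hρ2', MulChar.pow_apply' ρ (by norm_num) b]
        have h4b : ρ b ^ 4 = 1 := by
          have := qcc_sq_one (p := p) hb
          rw [hq] at this
          calc ρ b ^ 4 = ρ b ^ 2 * ρ b ^ 2 := by ring
          _ = 1 := this
        have : ρ b⁻¹ = qcc p b * ρ b := by
          apply mul_right_cancel₀ hρb0
          rw [hinv, hq]
          linear_combination -h4b
        rw [this]; ring
    have e8 : (∑ b : ZMod p, ρ b⁻¹ * ψ (c * (b + b⁻¹))) = Sρ := by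
      rw [hSρ]
      apply Fintype.sum_bijective (fun b : ZMod p => b⁻¹)
        (Function.Involutive.bijective (fun b => inv_inv b))
      intro b
      rw [inv_inv, add_comm b⁻¹ b]
    rw [e7, e8, ← hSρ]
    ring
  -- assemble
  have hqAB : ((quadraticChar (ZMod p) (A * B) : ℤ) : ℂ) = qcc p (A * B) := rfl
  have hargc : -B ^ 2 * (8 * A)⁻¹ = -(2 * c) := by
    rw [hc]
    field_simp
    ring
  rw [hqAB, hargc, h_units, h_rhs, h_sub]
  have key : (2 : ℂ) * (qcc p (A * B) * ψ (-(2 * c)) * Sρ) = 2 * (qcc p (A * B) * T) := by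
    calc (2 : ℂ) * (qcc p (A * B) * ψ (-(2 * c)) * Sρ)
        = qcc p (A * B) * (ψ (-(2 * c)) * (2 * Sρ)) := by ring
      _ = qcc p (A * B) * (ψ (-(2 * c)) * W') := by rw [h_W'2]
      _ = qcc p (A * B) * W := by rw [h_shift]
      _ = qcc p (A * B) * (2 * T) := by rw [h_W2T]
      _ = 2 * (qcc p (A * B) * T) := by ring
  exact mul_left_cancel₀ two_ne_zero key

end
end
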